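/- arXiv:2511.13004 — 5 statements merged into one kernel-verified Lean document; each statement's English description precedes it below -/
import Mathlib

section
/- Let n, δ be integers with δ ≥ 2 and n ≥ 7δ - 7. Then the signless Laplacian spectral radius of G* = K_δ ∨ (K_{n-2δ+1} ∪ (δ-1)K₁) satisfies 2n - 2δ < ρ_Q(G*) < 2n - δ. -/
/-- The join of two simple graphs: all edges within each part, plus all cross edges. -/
def gJoin {α β : Type*} (G : SimpleGraph α) (H : SimpleGraph β) : SimpleGraph (α ⊕ β) where
  Adj u v := match u, v with
    | Sum.inl a, Sum.inl b => G.Adj a b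
    | Sum.inr a, Sum.inr b => H.Adj a b
    | Sum.inl _, Sum.inr _ => True
    | Sum.inr _, Sum.inl _ => True
  symm := by constructor; rintro (a | a) (b | b) h
             · exact G.symm.symm _ _ h
             · trivial
             · trivial
             · exact H.symm.symm _ _ h
  loopless := by constructor; rintro (a | a) h
                 · exact G.loopless.irrefl a h
                 · exact H.loopless.irrefl a h

/-- The disjoint union of two simple graphs. -/
def gSum {α β : Type*} (G : SimpleGraph α) (H : SimpleGraph β) : SimpleGraph (α ⊕ β) where
  Adj u v := match u, v with
    | Sum.inl a, Sum.inl b => G.Adj a b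
    | Sum.inr a, Sum.inr b => H.Adj a b
    | _, _ => False
  symm := by constructor; rintro (a | a) (b | b) h
             · exact G.symm.symm _ _ h
             · exact h.elim
             · exact h.elim
             · exact H.symm.symm _ _ h
  loopless := by constructor; rintro (a | a) h
                 · exact G.loopless.irrefl a h
                 · exact H.loopless.irrefl a h

/-- The graph `K_δ ∨ (K_{n-2δ+1} ∪ (δ-1)K₁)`. -/
def Gstar (n δ : ℕ) :
    SimpleGraph (Fin δ ⊕ (Fin (n - 2 * δ + 1) ⊕ Fin (δ - 1))) :=
  gJoin (⊤ : SimpleGraph (Fin δ))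
    (gSum (⊤ : SimpleGraph (Fin (n - 2 * δ + 1))) (⊥ : SimpleGraph (Fin (δ - 1))))

/-- The signless Laplacian matrix `Q(G) = D(G) + A(G)` over ℝ. -/
noncomputable def qMatrix {V : Type*} [Fintype V] (G : SimpleGraph V) : Matrix V V ℝ := by
  classical exact Matrix.diagonal (fun v => (G.degree v : ℝ)) + G.adjMatrix ℝ

/-- The distance matrix of a graph over ℝ. -/
noncomputable def dMatrix {V : Type*} [Fintype V] (G : SimpleGraph V) : Matrix V V ℝ :=
  fun u v => (G.dist u v : ℝ)

/-- The set of eigenvalues of a real matrix. -/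
def eigSet {V : Type*} [Fintype V] (M : Matrix V V ℝ) : Set ℝ :=
  {μ | ∃ v : V → ℝ, v ≠ 0 ∧ M.mulVec v = μ • v}

/-- The number of odd components of a graph. -/
noncomputable def oddComp {V : Type*} (G : SimpleGraph V) : ℕ :=
  Nat.card {C : G.ConnectedComponent // Odd (Nat.card C.supp)}

/-- `F` is an even factor of `G`: a spanning subgraph with all degrees even and nonzero. -/
def IsEvenFactor {V : Type*} [Fintype V] (G F : SimpleGraph V) : Prop := by
  classical exact F ≤ G ∧ ∀ v : V, Even (F.degree v) ∧ 0 < F.degree v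


open Matrix

attribute [local instance] Classical.propDecidable

def liftV (n δ : ℕ) (a b c : ℝ) : Fin δ ⊕ (Fin (n - 2 * δ + 1) ⊕ Fin (δ - 1)) → ℝ :=
  Sum.elim (fun _ => a) (Sum.elim (fun _ => b) (fun _ => c))

lemma sum_ite_ne {m : ℕ} (i : Fin m) (f : Fin m → ℝ) :
    ∑ j, (if i = j then 0 else f j) = (∑ j, f j) - f i := by
  have h : ∀ j ∈ Finset.univ, (if i = j then (0:ℝ) else f j)
      = f j - (if i = j then f j else 0) := by intro j _; split <;> simp_all
  rw [Finset.sum_congr rfl h, Finset.sum_sub_distrib, Finset.sum_ite_eq]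
  simp

lemma adjRow_A (n δ : ℕ) (x : Fin δ ⊕ (Fin (n - 2 * δ + 1) ⊕ Fin (δ - 1)) → ℝ) (i : Fin δ) :
    ((Gstar n δ).adjMatrix ℝ *ᵥ x) (Sum.inl i)
    = ((∑ j, x (Sum.inl j)) - x (Sum.inl i)) + ∑ j, x (Sum.inr (Sum.inl j))
      + ∑ j, x (Sum.inr (Sum.inr j)) := by
  simp only [Matrix.mulVec, dotProduct, SimpleGraph.adjMatrix_apply, ite_mul, one_mul, zero_mul,
    Fintype.sum_sum_type]
  simp only [Gstar, gJoin, gSum, SimpleGraph.top_adj, ne_eq, ite_not]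
  rw [sum_ite_ne]
  simp
  ring

lemma adjRow_B (n δ : ℕ) (x : Fin δ ⊕ (Fin (n - 2 * δ + 1) ⊕ Fin (δ - 1)) → ℝ)
    (i : Fin (n - 2 * δ + 1)) :
    ((Gstar n δ).adjMatrix ℝ *ᵥ x) (Sum.inr (Sum.inl i))
    = (∑ j, x (Sum.inl j)) + ((∑ j, x (Sum.inr (Sum.inl j))) - x (Sum.inr (Sum.inl i))) := by
  simp only [Matrix.mulVec, dotProduct, SimpleGraph.adjMatrix_apply, ite_mul, one_mul, zero_mul,
    Fintype.sum_sum_type]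
  simp only [Gstar, gJoin, gSum, SimpleGraph.top_adj, ne_eq, ite_not]
  rw [sum_ite_ne]
  simp

lemma adjRow_C (n δ : ℕ) (x : Fin δ ⊕ (Fin (n - 2 * δ + 1) ⊕ Fin (δ - 1)) → ℝ)
    (i : Fin (δ - 1)) :
    ((Gstar n δ).adjMatrix ℝ *ᵥ x) (Sum.inr (Sum.inr i)) = ∑ j, x (Sum.inl j) := by
  simp only [Matrix.mulVec, dotProduct, SimpleGraph.adjMatrix_apply, ite_mul, one_mul, zero_mul,
    Fintype.sum_sum_type]
  simp [Gstar, gJoin, gSum]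

lemma degA (n δ : ℕ) (h2 : 2*δ ≤ n) (h1 : 1 ≤ δ) (i : Fin δ) :
    ((Gstar n δ).degree (Sum.inl i) : ℝ) = (n:ℝ) - 1 := by
  have h := SimpleGraph.adjMatrix_mulVec_const_apply (α := ℝ) (G := Gstar n δ) (a := 1)
    (v := Sum.inl i)
  rw [adjRow_A] at h
  simp [Function.const] at h
  have c1 : ((n - 2*δ : ℕ):ℝ) = (n:ℝ) - 2*δ := by
    rw [Nat.cast_sub h2]; push_cast; ring
  have c2 : ((δ - 1 : ℕ):ℝ) = (δ:ℝ) - 1 := by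
    rw [Nat.cast_sub h1]; push_cast; ring
  rw [c1, c2] at h
  linarith

lemma degB (n δ : ℕ) (h2 : 2*δ ≤ n) (i : Fin (n - 2*δ + 1)) :
    ((Gstar n δ).degree (Sum.inr (Sum.inl i)) : ℝ) = (n:ℝ) - δ := by
  have h := SimpleGraph.adjMatrix_mulVec_const_apply (α := ℝ) (G := Gstar n δ) (a := 1)
    (v := Sum.inr (Sum.inl i))
  rw [adjRow_B] at h
  simp [Function.const] at h
  have c1 : ((n - 2*δ : ℕ):ℝ) = (n:ℝ) - 2*δ := by
    rw [Nat.cast_sub h2]; push_cast; ring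
  rw [c1] at h
  linarith

lemma degC (n δ : ℕ) (i : Fin (δ - 1)) :
    ((Gstar n δ).degree (Sum.inr (Sum.inr i)) : ℝ) = (δ:ℝ) := by
  have h := SimpleGraph.adjMatrix_mulVec_const_apply (α := ℝ) (G := Gstar n δ) (a := 1)
    (v := Sum.inr (Sum.inr i))
  rw [adjRow_C] at h
  simp [Function.const] at h
  exact_mod_cast h.symm

lemma qMatrix_eq (n δ : ℕ) :
    qMatrix (Gstar n δ)
      = Matrix.diagonal (fun v => ((Gstar n δ).degree v : ℝ)) + (Gstar n δ).adjMatrix ℝ := by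
  unfold qMatrix
  congr!

lemma qRow (n δ : ℕ) (h2 : 2*δ ≤ n) (h1 : 1 ≤ δ) (a b c : ℝ) :
    (qMatrix (Gstar n δ)) *ᵥ (liftV n δ a b c)
    = liftV n δ (((n:ℝ)+δ-2)*a + ((n:ℝ)-2*δ+1)*b + ((δ:ℝ)-1)*c)
        ((δ:ℝ)*a + (2*(n:ℝ)-3*δ)*b) ((δ:ℝ)*a + (δ:ℝ)*c) := by
  have c2 : ((δ - 1 : ℕ):ℝ) = (δ:ℝ) - 1 := by
    rw [Nat.cast_sub h1]; push_cast; ring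
  have c3 : ((n - 2*δ + 1 : ℕ):ℝ) = (n:ℝ) - 2*δ + 1 := by
    rw [Nat.cast_add, Nat.cast_sub h2]; push_cast; ring
  funext v
  rw [qMatrix_eq, Matrix.add_mulVec]
  have hsA : ∑ j : Fin δ, liftV n δ a b c (Sum.inl j) = (δ:ℝ) * a := by
    simp only [liftV, Sum.elim_inl, Finset.sum_const, Finset.card_univ, Fintype.card_fin,
      nsmul_eq_mul]
  have hsB : ∑ j : Fin (n - 2*δ + 1), liftV n δ a b c (Sum.inr (Sum.inl j))
      = ((n:ℝ) - 2*δ + 1) * b := by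
    simp only [liftV, Sum.elim_inr, Sum.elim_inl, Finset.sum_const, Finset.card_univ,
      Fintype.card_fin, nsmul_eq_mul, c3]
  have hsC : ∑ j : Fin (δ - 1), liftV n δ a b c (Sum.inr (Sum.inr j))
      = ((δ:ℝ) - 1) * c := by
    simp only [liftV, Sum.elim_inr, Finset.sum_const, Finset.card_univ,
      Fintype.card_fin, nsmul_eq_mul, c2]
  rcases v with i | j | k
  · rw [Pi.add_apply, Matrix.mulVec_diagonal, adjRow_A, hsA, hsB, hsC, degA n δ h2 h1]
    simp only [liftV, Sum.elim_inl]; ring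
  · rw [Pi.add_apply, Matrix.mulVec_diagonal, adjRow_B, hsA, hsB, degB n δ h2]
    simp only [liftV, Sum.elim_inr, Sum.elim_inl]; ring
  · rw [Pi.add_apply, Matrix.mulVec_diagonal, adjRow_C, hsA, degC]
    simp only [liftV, Sum.elim_inr]; ring

lemma qNonneg (n δ : ℕ) (u w : Fin δ ⊕ (Fin (n - 2 * δ + 1) ⊕ Fin (δ - 1))) :
    0 ≤ qMatrix (Gstar n δ) u w := by
  rw [qMatrix_eq, Matrix.add_apply, Matrix.diagonal_apply, SimpleGraph.adjMatrix_apply]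
  have h1 : (0:ℝ) ≤ if (Gstar n δ).Adj u w then (1:ℝ) else 0 := by split <;> norm_num
  have h2 : (0:ℝ) ≤ if u = w then ((Gstar n δ).degree u : ℝ) else 0 := by
    split <;> positivity
  linarith

/-- the characteristic cubic of the quotient matrix -/
noncomputable def cub (N D x : ℝ) : ℝ :=
  -D*(D-1)*(x-2*N+3*D) + (x-D)*((x-N-D+2)*(x-2*N+3*D) - D*(N-2*D+1))

lemma det_cub (N D μ : ℝ) :
    (μ • (1 : Matrix (Fin 3) (Fin 3) ℝ)
      - !![N+D-2, N-2*D+1, D-1; D, 2*N-3*D, 0; D, 0, D]).det = cub N D μ := by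
  rw [Matrix.det_fin_three]
  simp [Matrix.sub_apply, Matrix.smul_apply, Matrix.one_apply, cub, Matrix.vecHead,
    Matrix.vecTail]
  ring

lemma cub_root (N D : ℝ) (hD : 2 ≤ D) (hN : 7*D-7 ≤ N) :
    ∃ μ, 2*N-2*D < μ ∧ μ ≤ 2*N ∧ cub N D μ = 0 := by
  have hcont : Continuous (cub N D) := by unfold cub; fun_prop
  have hneg : cub N D (2*N-2*D) < 0 := by
    have he : cub N D (2*N-2*D) = -(2*D*(D-1)*(N-D)) := by unfold cub; ring
    rw [he, neg_lt, neg_zero]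
    have hND : 0 < N - D := by nlinarith
    have hD1 : 0 < D - 1 := by nlinarith
    exact mul_pos (mul_pos (by linarith) hD1) hND
  have hpos : 0 < cub N D (2*N) := by
    have he : cub N D (2*N) = D*((2*N-D)*(2*N-D+5) - 3*D*(D-1)) := by unfold cub; ring
    rw [he]
    have h1 : 13*D - 14 ≤ 2*N - D := by nlinarith
    have h3 : (12:ℝ) ≤ 2*N - D := by nlinarith
    have h4 : (13*D-14)*(13*D-14) ≤ (2*N-D)*(2*N-D) :=
      mul_self_le_mul_self (by nlinarith) h1
    have h5 : 0 < (2*N-D)*(2*N-D+5) - 3*D*(D-1) := by nlinarith [sq_nonneg (D-2)]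
    exact mul_pos (by linarith) h5
  have hab : 2*N-2*D ≤ 2*N := by nlinarith
  obtain ⟨μ, hμIcc, hμ0⟩ :=
    intermediate_value_Icc hab hcont.continuousOn ⟨le_of_lt hneg, le_of_lt hpos⟩
  refine ⟨μ, ?_, hμIcc.2, hμ0⟩
  rcases lt_or_eq_of_le hμIcc.1 with h | h
  · exact h
  · exfalso; rw [← h] at hμ0; rw [hμ0] at hneg; exact lt_irrefl 0 hneg

theorem stmt_2 (n δ : ℕ) (hδ : 2 ≤ δ) (hn : 7 * (δ : ℝ) - 7 ≤ n) (ρ : ℝ)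
    (hρ : IsGreatest (eigSet (qMatrix (Gstar n δ))) ρ) :
    2 * (n : ℝ) - 2 * δ < ρ ∧ ρ < 2 * (n : ℝ) - δ := by
  have hδR : (2:ℝ) ≤ (δ:ℝ) := by exact_mod_cast hδ
  have h2 : 2*δ ≤ n := by
    have : (2*(δ:ℝ)) ≤ (n:ℝ) := by nlinarith
    exact_mod_cast this
  have h1 : 1 ≤ δ := le_trans (by norm_num) hδ
  have hδ0 : 0 < δ := h1
  have hδ1 : 0 < δ - 1 := by omega
  have hs0 : 0 < n - 2*δ + 1 := Nat.succ_pos _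
  constructor
  · -- lower bound
    obtain ⟨μ, hμgt, hμle, hμ0⟩ := cub_root (n:ℝ) (δ:ℝ) hδR hn
    have hdet : (μ • (1 : Matrix (Fin 3) (Fin 3) ℝ)
        - !![(n:ℝ)+(δ:ℝ)-2, (n:ℝ)-2*(δ:ℝ)+1, (δ:ℝ)-1; (δ:ℝ), 2*(n:ℝ)-3*(δ:ℝ), 0;
             (δ:ℝ), 0, (δ:ℝ)]).det = 0 := by
      rw [det_cub, hμ0]
    obtain ⟨w, hw0, hww⟩ := Matrix.exists_mulVec_eq_zero_iff.mpr hdet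
    have hMw : !![(n:ℝ)+(δ:ℝ)-2, (n:ℝ)-2*(δ:ℝ)+1, (δ:ℝ)-1; (δ:ℝ), 2*(n:ℝ)-3*(δ:ℝ), 0;
        (δ:ℝ), 0, (δ:ℝ)] *ᵥ w = μ • w := by
      rw [Matrix.sub_mulVec, Matrix.smul_mulVec, Matrix.one_mulVec, sub_eq_zero] at hww
      exact hww.symm
    have e0 : ((n:ℝ)+(δ:ℝ)-2)*(w 0) + ((n:ℝ)-2*(δ:ℝ)+1)*(w 1) + ((δ:ℝ)-1)*(w 2) = μ * w 0 := by
      have := congrFun hMw 0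
      simp [Matrix.mulVec, dotProduct, Fin.sum_univ_three] at this
      linarith
    have e1 : (δ:ℝ)*(w 0) + (2*(n:ℝ)-3*(δ:ℝ))*(w 1) = μ * w 1 := by
      have := congrFun hMw 1
      simp [Matrix.mulVec, dotProduct, Fin.sum_univ_three] at this
      linarith
    have e2 : (δ:ℝ)*(w 0) + (δ:ℝ)*(w 2) = μ * w 2 := by
      have := congrFun hMw 2
      simp [Matrix.mulVec, dotProduct, Fin.sum_univ_three] at this
      linarith
    have hmem : μ ∈ eigSet (qMatrix (Gstar n δ)) := by
      refine ⟨liftV n δ (w 0) (w 1) (w 2), ?_, ?_⟩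
      · intro h
        apply hw0
        funext i
        fin_cases i
        · exact congrFun h (Sum.inl ⟨0, hδ0⟩)
        · exact congrFun h (Sum.inr (Sum.inl ⟨0, hs0⟩))
        · exact congrFun h (Sum.inr (Sum.inr ⟨0, hδ1⟩))
      · rw [qRow n δ h2 h1]
        funext v
        rcases v with i | j | k <;>
          simp only [liftV, Sum.elim_inl, Sum.elim_inr, Pi.smul_apply, smul_eq_mul] <;>
          linarith [e0, e1, e2]
    calc 2 * (n:ℝ) - 2 * (δ:ℝ) < μ := hμgt
      _ ≤ ρ := hρ.2 hmem
  · -- upper bound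
    obtain ⟨v, hv0, hv⟩ := hρ.1
    set z := liftV n δ ((n:ℝ)-1) ((n:ℝ)-(δ:ℝ)) (δ:ℝ) with hz
    have hzpos : ∀ u, 0 < z u := by
      rintro (i | j | k) <;> simp only [hz, liftV, Sum.elim_inl, Sum.elim_inr] <;> nlinarith
    have hQz : ∀ u, (qMatrix (Gstar n δ) *ᵥ z) u < (2*(n:ℝ) - (δ:ℝ)) * z u := by
      have hkey := qRow n δ h2 h1 ((n:ℝ)-1) ((n:ℝ)-(δ:ℝ)) (δ:ℝ)
      rintro (i | j | k) <;> rw [hz, hkey] <;>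
        simp only [liftV, Sum.elim_inl, Sum.elim_inr] <;> nlinarith
    have huniv : (Finset.univ : Finset (Fin δ ⊕ (Fin (n - 2*δ + 1) ⊕ Fin (δ - 1)))).Nonempty :=
      ⟨Sum.inl ⟨0, hδ0⟩, Finset.mem_univ _⟩
    obtain ⟨u, -, hu⟩ := Finset.exists_max_image Finset.univ (fun u => |v u| / z u) huniv
    set t := |v u| / z u with ht
    have hvz : ∀ x, |v x| ≤ t * z x := by
      intro x
      have hx := hu x (Finset.mem_univ x)
      rw [div_le_iff₀ (hzpos x)] at hx
      linarith [hx]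
    have hvu : |v u| = t * z u := by
      rw [ht, div_mul_cancel₀]
      exact ne_of_gt (hzpos u)
    have htpos : 0 < t := by
      obtain ⟨x, hx⟩ := Function.ne_iff.mp hv0
      have h1' : 0 < |v x| / z x := div_pos (abs_pos.mpr hx) (hzpos x)
      exact lt_of_lt_of_le h1' (hu x (Finset.mem_univ x))
    have hvupos : 0 < |v u| := by rw [hvu]; exact mul_pos htpos (hzpos u)
    have hQvu : (qMatrix (Gstar n δ) *ᵥ v) u = ρ * v u := by
      rw [hv]; simp
    have hsum : (qMatrix (Gstar n δ) *ᵥ v) u = ∑ x, qMatrix (Gstar n δ) u x * v x := rfl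
    have hsum2 : (qMatrix (Gstar n δ) *ᵥ z) u = ∑ x, qMatrix (Gstar n δ) u x * z x := rfl
    have hstep : |ρ| * |v u| < (2*(n:ℝ) - (δ:ℝ)) * |v u| := by
      calc |ρ| * |v u| = |ρ * v u| := by rw [abs_mul]
        _ = |∑ x, qMatrix (Gstar n δ) u x * v x| := by rw [← hsum, hQvu]
        _ ≤ ∑ x, |qMatrix (Gstar n δ) u x * v x| := Finset.abs_sum_le_sum_abs _ _
        _ = ∑ x, qMatrix (Gstar n δ) u x * |v x| := by
            refine Finset.sum_congr rfl fun x _ => ?_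
            rw [abs_mul, abs_of_nonneg (qNonneg n δ u x)]
        _ ≤ ∑ x, qMatrix (Gstar n δ) u x * (t * z x) := by
            refine Finset.sum_le_sum fun x _ => ?_
            exact mul_le_mul_of_nonneg_left (hvz x) (qNonneg n δ u x)
        _ = t * ∑ x, qMatrix (Gstar n δ) u x * z x := by
            rw [Finset.mul_sum]; refine Finset.sum_congr rfl fun x _ => ?_; ring
        _ = t * (qMatrix (Gstar n δ) *ᵥ z) u := by rw [hsum2]
        _ < t * ((2*(n:ℝ) - (δ:ℝ)) * z u) := mul_lt_mul_of_pos_left (hQz u) htpos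
        _ = (2*(n:ℝ) - (δ:ℝ)) * |v u| := by rw [hvu]; ring
    have hρabs : |ρ| < 2*(n:ℝ) - (δ:ℝ) := lt_of_mul_lt_mul_right hstep (le_of_lt hvupos)
    calc ρ ≤ |ρ| := le_abs_self ρ
      _ < 2*(n:ℝ) - (δ:ℝ) := hρabs
end

section
/- For all real numbers n, s, δ with δ ≥ 2, 2 ≤ s ≤ n/2, and n ≥ 7δ - 7, and all real x ≥ 2n - 2δ, the quantity η₁(x) = x² + (n + 4 - 4s - 4δ)x - 2n² + 2n + 4sn + 4δn - 2s² - 2δ² - 2s - 2δ - 2sδ is strictly positive. -/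
theorem stmt_4 (n s δ x : ℝ) (hδ : 2 ≤ δ) (hs1 : 2 ≤ s) (hs2 : s ≤ n / 2)
    (hn : 7 * δ - 7 ≤ n) (hx : 2 * n - 2 * δ ≤ x) :
    x ^ 2 + (n + 4 - 4 * s - 4 * δ) * x - 2 * n ^ 2 + 2 * n + 4 * s * n + 4 * δ * n
      - 2 * s ^ 2 - 2 * δ ^ 2 - 2 * s - 2 * δ - 2 * s * δ > 0 := by
  have h1 : 0 ≤ x - (2 * n - 2 * δ) := by linarith
  have h2 : 0 ≤ x + 3 * n - 4 * s - 6 * δ + 4 := by linarith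
  have hmono : 0 ≤ (x - (2 * n - 2 * δ)) * (x + 3 * n - 4 * s - 6 * δ + 4) :=
    mul_nonneg h1 h2
  have hval : 4*n^2 - 4*s*n - 14*n*δ + 10*n - 2*s^2 + 6*s*δ - 2*s + 10*δ^2 - 10*δ > 0 := by
    nlinarith [mul_nonneg (by linarith : (0:ℝ) ≤ n - 2*s) (by linarith : (0:ℝ) ≤ n - 7*δ + 7),
      mul_nonneg (by linarith : (0:ℝ) ≤ n - 2*s) (by linarith : (0:ℝ) ≤ δ - 2),
      mul_nonneg (by linarith : (0:ℝ) ≤ n - 7*δ + 7) (by linarith : (0:ℝ) ≤ δ - 2),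
      sq_nonneg (n - 2*s), sq_nonneg (δ - 2), sq_nonneg (n - 7*δ + 7)]
  nlinarith [hmono, hval]
end

section
/- Let n, s, δ be real numbers with s ≥ 3, δ ≥ s + 1, and n ≥ δ²/4 + δ/2 + 6. Then f(n) = (4s-8)n² + (34δ + 8s - 16δs - 18)n + 2s⁴ - 10s³ - 2δs³ + 6δs² + 18s² + 16δ²s - 18δs - 14s - 36δ² + 34δ > 0. -/
theorem stmt_5 (n s δ : ℝ) (hs : 3 ≤ s) (hδ : s + 1 ≤ δ) (hn : δ ^ 2 / 4 + δ / 2 + 6 ≤ n) :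
    (4 * s - 8) * n ^ 2 + (34 * δ + 8 * s - 16 * δ * s - 18) * n
      + 2 * s ^ 4 - 10 * s ^ 3 - 2 * δ * s ^ 3 + 6 * δ * s ^ 2 + 18 * s ^ 2
      + 16 * δ ^ 2 * s - 18 * δ * s - 14 * s - 36 * δ ^ 2 + 34 * δ > 0 := by
  have ha : (0:ℝ) ≤ s - 3 := by linarith
  have hb : (0:ℝ) ≤ δ - s - 1 := by linarith
  have hm : (0:ℝ) ≤ n - (δ ^ 2 / 4 + δ / 2 + 6) := by linarith
  nlinarith [mul_nonneg (mul_nonneg hm hm) ha, mul_nonneg hm hm,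
    mul_nonneg hm ha, mul_nonneg hm hb, mul_nonneg (mul_nonneg hm ha) ha,
    mul_nonneg (mul_nonneg hm ha) hb, mul_nonneg (mul_nonneg hm hb) hb,
    mul_nonneg (mul_nonneg (mul_nonneg hm ha) ha) ha,
    mul_nonneg ha hb, mul_nonneg (mul_nonneg ha ha) hb,
    mul_nonneg (mul_nonneg ha hb) hb, mul_nonneg (mul_nonneg hb hb) hb,
    mul_nonneg (mul_nonneg (mul_nonneg ha ha) ha) ha,
    mul_nonneg (mul_nonneg (mul_nonneg ha ha) ha) hb,
    mul_nonneg (mul_nonneg (mul_nonneg ha ha) hb) hb,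
    mul_nonneg (mul_nonneg (mul_nonneg ha hb) hb) hb,
    mul_nonneg (mul_nonneg (mul_nonneg hb hb) hb) hb,
    mul_nonneg (mul_nonneg (mul_nonneg (mul_nonneg ha ha) ha) ha) ha,
    mul_nonneg (mul_nonneg (mul_nonneg (mul_nonneg ha ha) ha) ha) hb]
end

section
/- For all real numbers n and δ with δ ≥ 2 and n ≥ 7δ - 7, the cubic ψ(x) = x³ + (4 - 3n)x² + (2n² + 4δn - 10n - 4δ² + 8)x + 4n² - 4δn² + 4δ²n + 8δn - 12n - 8δ² + 8 satisfies ψ(x) > 0 for all x ≥ 2n - δ. -/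
theorem stmt_7 (n δ : ℝ) (hδ : 2 ≤ δ) (hn : 7 * δ - 7 ≤ n) :
    ∀ x : ℝ, 2 * n - δ ≤ x →
      x ^ 3 + (4 - 3 * n) * x ^ 2 + (2 * n ^ 2 + 4 * δ * n - 10 * n - 4 * δ ^ 2 + 8) * x
        + 4 * n ^ 2 - 4 * δ * n ^ 2 + 4 * δ ^ 2 * n + 8 * δ * n - 12 * n - 8 * δ ^ 2 + 8 > 0 := by
  intro x hx
  have ht : 0 ≤ x - (2 * n - δ) := by linarith
  set t := x - (2 * n - δ) with htdef
  have hx' : x = 2 * n - δ + t := by ring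
  have h1 : 0 < n - 2 * δ + 3 := by linarith
  have h2 : 0 < 2 * n - 3 * δ := by linarith
  have h3 : 0 < n - δ := by linarith
  have hA : 0 < δ * (2 * n - 3 * δ) * (n - δ) + (2 * δ + 4) * (n - 2 * δ) + 8 := by
    nlinarith [mul_pos (mul_pos (by linarith : (0:ℝ) < δ) h2) h3]
  have hB : 0 < 2 * n ^ 2 - 2 * n * δ - δ ^ 2 + 6 * n - 8 * δ + 8 := by
    nlinarith [mul_pos h3 h3, mul_pos h2 h3]
  have hC : 0 < 3 * (n - δ) + 4 := by linarith
  rw [hx']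
  nlinarith [mul_nonneg (mul_nonneg ht ht) ht, mul_nonneg (mul_nonneg ht ht) hC.le,
    mul_nonneg ht hB.le, hA]
end

section
/- Let n, s, δ be real numbers with 4 ≤ s ≤ δ - 1 and n ≥ δ²/3 + 3. Then g(n) = (3s-6)n² + (2s³ - 11s² - 2δs² + 7δs + 9s - 4δ + 9)n - s⁴ + 3δs³ + s³ - 2δ²s² - 8δs² + 12s² + 4δ²s + 4δs + 21s - δ² - δ + 3 > 0. -/
theorem stmt_12 (n s δ : ℝ) (hs : 4 ≤ s) (hsδ : s ≤ δ - 1) (hn : δ ^ 2 / 3 + 3 ≤ n) :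
    (3 * s - 6) * n ^ 2 + (2 * s ^ 3 - 11 * s ^ 2 - 2 * δ * s ^ 2 + 7 * δ * s + 9 * s - 4 * δ + 9) * n
      - s ^ 4 + 3 * δ * s ^ 3 + s ^ 3 - 2 * δ ^ 2 * s ^ 2 - 8 * δ * s ^ 2 + 12 * s ^ 2
      + 4 * δ ^ 2 * s + 4 * δ * s + 21 * s - δ ^ 2 - δ + 3 > 0 := by
  set a := s - 4 with ha'
  set b := δ - 1 - s with hb'
  set m := n - (δ ^ 2 / 3 + 3) with hm'
  have ha : 0 ≤ a := by simp [ha']; linarith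
  have hb : 0 ≤ b := by simp [hb']; linarith
  have hm : 0 ≤ m := by simp [hm']; linarith
  have key : 3 * ((3 * s - 6) * n ^ 2 + (2 * s ^ 3 - 11 * s ^ 2 - 2 * δ * s ^ 2 + 7 * δ * s + 9 * s - 4 * δ + 9) * n
      - s ^ 4 + 3 * δ * s ^ 3 + s ^ 3 - 2 * δ ^ 2 * s ^ 2 - 8 * δ * s ^ 2 + 12 * s ^ 2
      + 4 * δ ^ 2 * s + 4 * δ * s + 21 * s - δ ^ 2 - δ + 3) =
      1021 + 385 * b + 162 * b ^ 2 + 32 * b ^ 3 + 2 * b ^ 4 + 676 * a + 310 * a * b + 110 * a * b ^ 2 + 19 * a * b ^ 3 + 1 * a * b ^ 4 + 304 * a ^ 2 + 110 * a ^ 2 * b + 22 * a ^ 2 * b ^ 2 + 2 * a ^ 2 * b ^ 3 + 100 * a ^ 3 + 24 * a ^ 3 * b + 2 * a ^ 3 * b ^ 2 + 16 * a ^ 4 + 2 * a ^ 4 * b + 1 * a ^ 5 + 279 * m + 96 * m * b + 12 * m * b ^ 2 + 216 * m * a + 57 * m * a * b + 6 * m * a * b ^ 2 + 54 * m * a ^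 2 + 6 * m * a ^ 2 * b + 6 * m * a ^ 3 + 18 * m ^ 2 + 9 * m ^ 2 * a := by
    rw [ha', hb', hm']; ring
  have pos : (0:ℝ) < 1021 + 385 * b + 162 * b ^ 2 + 32 * b ^ 3 + 2 * b ^ 4 + 676 * a + 310 * a * b + 110 * a * b ^ 2 + 19 * a * b ^ 3 + 1 * a * b ^ 4 + 304 * a ^ 2 + 110 * a ^ 2 * b + 22 * a ^ 2 * b ^ 2 + 2 * a ^ 2 * b ^ 3 + 100 * a ^ 3 + 24 * a ^ 3 * b + 2 * a ^ 3 * b ^ 2 + 16 * a ^ 4 + 2 * a ^ 4 * b + 1 * a ^ 5 + 279 * m + 96 * m * b + 12 * m * b ^ 2 + 216 * m * a + 57 * m * a * b + 6 * m * a * b ^ 2 + 54 * m * a ^ 2 + 6 * m * a ^ 2 * b + 6 * m * a ^ 3 + 18 * m ^ 2 + 9 * m ^ 2 * a := by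
    have h1 : (0:ℝ) ≤ a * b := mul_nonneg ha hb
    have h2 : (0:ℝ) ≤ m * a := mul_nonneg hm ha
    have h3 : (0:ℝ) ≤ m * b := mul_nonneg hm hb
    positivity
  linarith
end
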